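/- For every natural number m ≥ 1 and every natural number base u ≥ 2, it is not the case that the rebased Goodstein sequence is strictly increasing at every step; that is, it is false that S(n+1, u, G(n, m)) < S(n+2, u, G(n+1, m)) holds for all n ≥ 1. -/

import Mathlib

/-- `hsub b u m` substitutes the value `u` for the base `b` throughout the
hereditary base-`b` representation of `m` (with `hsub b u 0 = 0`). -/
def hsub (b u : ℕ) (m : ℕ) : ℕ :=
  if m = 0 then 0
  else
    u ^ hsub b u (Nat.log b m) * (m / b ^ Nat.log b m) + hsub b u (m % b ^ Nat.log b m)
termination_by m
decreasing_by
  · exact Nat.log_lt_self b (by assumption)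
  · have hpos : 0 < b ^ Nat.log b m := by
      rcases Nat.eq_zero_or_pos b with hb | hb
      · simp [hb]
      · exact pow_pos hb _
    exact lt_of_lt_of_le (Nat.mod_lt _ hpos) (Nat.pow_log_le_self b (by assumption))

/-- Goodstein's base-change ("bumping") function: replace the base `b` by `b + 1`
throughout the hereditary base-`b` representation of `m` (with `B b 0 = 0`). -/
def B (b m : ℕ) : ℕ := hsub b (b + 1) m

/-- The Goodstein sequence of `m`: `G 1 m = m`, and `G (k+1) m = B (k+1) (G k m) - 1`
for `k ≥ 1` (truncated subtraction), so the `k`-th term is written in hereditary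
base `k + 1`. -/
def G : ℕ → ℕ → ℕ
  | 0, m => m
  | 1, m => m
  | (k + 2), m => B (k + 2) (G (k + 1) m) - 1

/-- The auxiliary Goodstein-type sequence: `L 1 k = k ^ k` (written in hereditary
base `k`), and `L (n+1) k = B (k+n-1) (L n k) - 1` for `n ≥ 1` (truncated
subtraction), so the `n`-th term is written in hereditary base `k + n - 1`. -/
def L : ℕ → ℕ → ℕ
  | 0, k => k ^ k
  | 1, k => k ^ k
  | (n + 2), k => B (k + n) (L (n + 1) k) - 1

/-- `O b m` is the ordinal obtained by substituting `ω` for the base `b`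
throughout the hereditary base-`b` representation of `m` (with `O b 0 = 0`). -/
noncomputable def O (b : ℕ) (m : ℕ) : Ordinal :=
  if m = 0 then 0
  else
    Ordinal.omega0 ^ O b (Nat.log b m) * ((m / b ^ Nat.log b m : ℕ) : Ordinal)
      + O b (m % b ^ Nat.log b m)
termination_by m
decreasing_by
  · exact Nat.log_lt_self b (by assumption)
  · have hpos : 0 < b ^ Nat.log b m := by
      rcases Nat.eq_zero_or_pos b with hb | hb
      · simp [hb]
      · exact pow_pos hb _
    exact lt_of_lt_of_le (Nat.mod_lt _ hpos) (Nat.pow_log_le_self b (by assumption))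

section Aux

lemma hsub_zero (b u : ℕ) : hsub b u 0 = 0 := by rw [hsub]; simp

lemma O_zero (b : ℕ) : O b 0 = 0 := by rw [O]; simp

lemma nat_decomp {u E d r : ℕ} (hu : 2 ≤ u) (hd0 : 0 < d) (hd : d < u) (hr : r < u ^ E) :
    Nat.log u (u ^ E * d + r) = E ∧ (u ^ E * d + r) / u ^ E = d ∧ (u ^ E * d + r) % u ^ E = r := by
  have hpow : 0 < u ^ E := Nat.pow_pos (by omega)
  refine ⟨?_, ?_, ?_⟩
  · apply Nat.log_eq_of_pow_le_of_lt_pow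
    · calc u ^ E = u ^ E * 1 := (mul_one _).symm
        _ ≤ u ^ E * d + r := by
          have := Nat.mul_le_mul_left (u ^ E) hd0
          omega
    · calc u ^ E * d + r < u ^ E * d + u ^ E := by omega
        _ = u ^ E * (d + 1) := by ring
        _ ≤ u ^ E * u := Nat.mul_le_mul_left _ (by omega)
        _ = u ^ (E + 1) := by rw [pow_succ]
  · rw [Nat.mul_add_div hpow, Nat.div_eq_of_lt hr, add_zero]
  · rw [Nat.mul_add_mod, Nat.mod_eq_of_lt hr]

lemma hsub_pos {b u : ℕ} (hb : 2 ≤ b) (hu : 1 ≤ u) {m : ℕ} (hm : m ≠ 0) :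
    0 < hsub b u m := by
  rw [hsub, if_neg hm]
  have h1 : 0 < u ^ hsub b u (Nat.log b m) := Nat.pow_pos hu
  have h2 : 0 < m / b ^ Nat.log b m :=
    Nat.one_le_div_iff (Nat.pow_pos (by omega)) |>.2 (Nat.pow_log_le_self b hm)
  have := Nat.mul_le_mul h1 h2
  omega

/-- Combined bound and strict monotonicity for `hsub` when `b ≤ u`. -/
lemma hsub_key (b u : ℕ) (hb : 2 ≤ b) (hbu : b ≤ u) :
    ∀ x : ℕ, (∀ e, x < b ^ e → hsub b u x < u ^ hsub b u e) ∧
             (∀ n, x < n → hsub b u x < hsub b u n) := by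
  intro x
  induction x using Nat.strong_induction_on with
  | _ x IH =>
    have hu : 2 ≤ u := le_trans hb hbu
    have hbpos : 0 < b := by omega
    have hbnd : ∀ e, x < b ^ e → hsub b u x < u ^ hsub b u e := by
      intro e he
      by_cases hx : x = 0
      · rw [hx, hsub_zero]; exact Nat.pow_pos (by omega)
      · set l := Nat.log b x with hl
        have hlpos : 0 < b ^ l := Nat.pow_pos hbpos
        have hle : l < e := Nat.log_lt_of_lt_pow hx he
        have hlx : l < x := Nat.log_lt_self b hx
        have hrx : x % b ^ l < b ^ l := Nat.mod_lt _ hlpos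
        have hrlt : x % b ^ l < x := lt_of_lt_of_le hrx (Nat.pow_log_le_self b hx)
        have hd : x / b ^ l < b := by
          rw [Nat.div_lt_iff_lt_mul hlpos]
          calc x < b ^ (l + 1) := Nat.lt_pow_succ_log_self (by omega) x
            _ = b * b ^ l := by ring
        have h1 : hsub b u (x % b ^ l) < u ^ hsub b u l := (IH _ hrlt).1 l hrx
        have h2 : hsub b u l < hsub b u e := (IH _ hlx).2 e hle
        rw [hsub, if_neg hx, ← hl]
        calc u ^ hsub b u l * (x / b ^ l) + hsub b u (x % b ^ l)
            < u ^ hsub b u l * (x / b ^ l) + u ^ hsub b u l := by omega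
          _ = u ^ hsub b u l * (x / b ^ l + 1) := by ring
          _ ≤ u ^ hsub b u l * u := Nat.mul_le_mul_left _ (by omega)
          _ = u ^ (hsub b u l + 1) := by rw [pow_succ]
          _ ≤ u ^ hsub b u e := Nat.pow_le_pow_right (by omega) (by omega)
    refine ⟨hbnd, ?_⟩
    intro n hxn
    have hn : n ≠ 0 := by omega
    by_cases hx : x = 0
    · rw [hx, hsub_zero]; exact hsub_pos hb (by omega) hn
    · have hlog : Nat.log b x ≤ Nat.log b n := Nat.log_mono_right (le_of_lt hxn)
      rcases lt_or_eq_of_le hlog with hlt | heq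
      · have hxe : x < b ^ Nat.log b n :=
          lt_of_lt_of_le (Nat.lt_pow_succ_log_self (by omega) x)
            (Nat.pow_le_pow_right hbpos hlt)
        have h1 := hbnd _ hxe
        have hdn : 0 < n / b ^ Nat.log b n :=
          Nat.one_le_div_iff (Nat.pow_pos hbpos) |>.2 (Nat.pow_log_le_self b hn)
        conv_rhs => rw [hsub, if_neg hn]
        have := Nat.mul_le_mul_left (u ^ hsub b u (Nat.log b n)) hdn
        omega
      · set l := Nat.log b x with hl
        have hlpos : 0 < b ^ l := Nat.pow_pos hbpos
        have hrx : x % b ^ l < b ^ l := Nat.mod_lt _ hlpos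
        have hrlt : x % b ^ l < x := lt_of_lt_of_le hrx (Nat.pow_log_le_self b hx)
        have hdle : x / b ^ l ≤ n / b ^ l := Nat.div_le_div_right (le_of_lt hxn)
        conv_lhs => rw [hsub, if_neg hx]
        conv_rhs => rw [hsub, if_neg hn]
        rw [← heq, ← hl]
        rcases lt_or_eq_of_le hdle with hdlt | hdeq
        · have h1 : hsub b u (x % b ^ l) < u ^ hsub b u l := (IH _ hrlt).1 l hrx
          calc u ^ hsub b u l * (x / b ^ l) + hsub b u (x % b ^ l)
              < u ^ hsub b u l * (x / b ^ l) + u ^ hsub b u l := by omega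
            _ = u ^ hsub b u l * (x / b ^ l + 1) := by ring
            _ ≤ u ^ hsub b u l * (n / b ^ l) := Nat.mul_le_mul_left _ (by omega)
            _ ≤ u ^ hsub b u l * (n / b ^ l) + hsub b u (n % b ^ l) := Nat.le_add_right _ _
        · have hxeq := Nat.div_add_mod x (b ^ l)
          have hneq := Nat.div_add_mod n (b ^ l)
          have hrr : x % b ^ l < n % b ^ l := by
            rw [← hdeq] at hneq; omega
          have h1 : hsub b u (x % b ^ l) < hsub b u (n % b ^ l) := (IH _ hrlt).2 _ hrr
          rw [hdeq]
          omega

open Ordinal in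
lemma O_pos {b : ℕ} (hb : 2 ≤ b) {m : ℕ} (hm : m ≠ 0) : 0 < O.{0} b m := by
  rw [O, if_neg hm]
  have h1 : (0 : Ordinal) < omega0 ^ O b (Nat.log b m) := opow_pos _ omega0_pos
  have h2 : 0 < m / b ^ Nat.log b m :=
    Nat.one_le_div_iff (Nat.pow_pos (by omega)) |>.2 (Nat.pow_log_le_self b hm)
  have h3 : (0 : Ordinal) < ((m / b ^ Nat.log b m : ℕ) : Ordinal) := by
    exact_mod_cast h2
  exact lt_of_lt_of_le (mul_pos h1 h3) le_self_add

open Ordinal in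
/-- Combined bound and strict monotonicity for `O`. -/
lemma O_key (b : ℕ) (hb : 2 ≤ b) :
    ∀ x : ℕ, (∀ e, x < b ^ e → O.{0} b x < omega0 ^ O.{0} b e) ∧
             (∀ n : ℕ, x < n → O.{0} b x < O.{0} b n) := by
  intro x
  induction x using Nat.strong_induction_on with
  | _ x IH =>
    have hbpos : 0 < b := by omega
    have hbnd : ∀ e, x < b ^ e → O b x < omega0 ^ O b e := by
      intro e he
      by_cases hx : x = 0
      · rw [hx, O_zero]; exact opow_pos _ omega0_pos
      · set l := Nat.log b x with hl
        have hlpos : 0 < b ^ l := Nat.pow_pos hbpos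
        have hle : l < e := Nat.log_lt_of_lt_pow hx he
        have hlx : l < x := Nat.log_lt_self b hx
        have hrx : x % b ^ l < b ^ l := Nat.mod_lt _ hlpos
        have hrlt : x % b ^ l < x := lt_of_lt_of_le hrx (Nat.pow_log_le_self b hx)
        have h1 : O b (x % b ^ l) < omega0 ^ O b l := (IH _ hrlt).1 l hrx
        have h2 : O b l < O b e := (IH _ hlx).2 e hle
        rw [O, if_neg hx, ← hl]
        calc omega0 ^ O b l * ((x / b ^ l : ℕ) : Ordinal) + O b (x % b ^ l)
            < omega0 ^ O b l * ((x / b ^ l : ℕ) : Ordinal) + omega0 ^ O b l :=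
              add_lt_add_right h1 _
          _ = omega0 ^ O b l * (((x / b ^ l : ℕ) : Ordinal) + 1) := by rw [mul_add_one]
          _ < omega0 ^ O b l * omega0 := by
              apply mul_lt_mul_of_pos_left _ (opow_pos _ omega0_pos)
              have : (((x / b ^ l : ℕ) : Ordinal) + 1) = (((x / b ^ l + 1 : ℕ)) : Ordinal) := by
                push_cast; ring
              rw [this]; exact nat_lt_omega0 _
          _ = omega0 ^ (O b l + 1) := by rw [add_one_eq_succ, opow_succ]
          _ ≤ omega0 ^ O b e := by
              apply opow_le_opow_right omega0_pos
              rw [add_one_eq_succ]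
              exact Order.succ_le_of_lt h2
    refine ⟨hbnd, ?_⟩
    intro n hxn
    have hn : n ≠ 0 := by omega
    by_cases hx : x = 0
    · rw [hx, O_zero]; exact O_pos hb hn
    · have hlog : Nat.log b x ≤ Nat.log b n := Nat.log_mono_right (le_of_lt hxn)
      rcases lt_or_eq_of_le hlog with hlt | heq
      · have hxe : x < b ^ Nat.log b n :=
          lt_of_lt_of_le (Nat.lt_pow_succ_log_self (by omega) x)
            (Nat.pow_le_pow_right hbpos hlt)
        have h1 := hbnd _ hxe
        have hdn : 0 < n / b ^ Nat.log b n :=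
          Nat.one_le_div_iff (Nat.pow_pos hbpos) |>.2 (Nat.pow_log_le_self b hn)
        calc O b x < omega0 ^ O b (Nat.log b n) := h1
          _ ≤ omega0 ^ O b (Nat.log b n) * ((n / b ^ Nat.log b n : ℕ) : Ordinal) := by
              apply Ordinal.le_mul_left
              exact_mod_cast hdn
          _ ≤ omega0 ^ O b (Nat.log b n) * ((n / b ^ Nat.log b n : ℕ) : Ordinal)
                + O b (n % b ^ Nat.log b n) := le_self_add
          _ = O b n := by conv_rhs => rw [O, if_neg hn]
      · set l := Nat.log b x with hl
        have hlpos : 0 < b ^ l := Nat.pow_pos hbpos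
        have hrx : x % b ^ l < b ^ l := Nat.mod_lt _ hlpos
        have hrlt : x % b ^ l < x := lt_of_lt_of_le hrx (Nat.pow_log_le_self b hx)
        have hdle : x / b ^ l ≤ n / b ^ l := Nat.div_le_div_right (le_of_lt hxn)
        conv_lhs => rw [O, if_neg hx]
        conv_rhs => rw [O, if_neg hn]
        rw [← heq, ← hl]
        rcases lt_or_eq_of_le hdle with hdlt | hdeq
        · have h1 : O b (x % b ^ l) < omega0 ^ O b l := (IH _ hrlt).1 l hrx
          calc omega0 ^ O b l * ((x / b ^ l : ℕ) : Ordinal) + O b (x % b ^ l)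
              < omega0 ^ O b l * ((x / b ^ l : ℕ) : Ordinal) + omega0 ^ O b l :=
                add_lt_add_right h1 _
            _ = omega0 ^ O b l * (((x / b ^ l : ℕ) : Ordinal) + 1) := by rw [mul_add_one]
            _ ≤ omega0 ^ O b l * ((n / b ^ l : ℕ) : Ordinal) := by
                apply mul_le_mul_right
                have : (((x / b ^ l : ℕ) : Ordinal) + 1) = (((x / b ^ l + 1 : ℕ)) : Ordinal) := by
                  push_cast; ring
                rw [this]
                exact_mod_cast hdlt
            _ ≤ omega0 ^ O b l * ((n / b ^ l : ℕ) : Ordinal) + O b (n % b ^ l) :=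
                le_self_add
        · have hxeq := Nat.div_add_mod x (b ^ l)
          have hneq := Nat.div_add_mod n (b ^ l)
          have hrr : x % b ^ l < n % b ^ l := by
            rw [← hdeq] at hneq; omega
          have h1 : O b (x % b ^ l) < O b (n % b ^ l) := (IH _ hrlt).2 _ hrr
          rw [hdeq]
          exact add_lt_add_right h1 _

open Ordinal in
/-- Base change invariance of the ordinal assignment. -/
lemma O_hsub (b : ℕ) (hb : 2 ≤ b) : ∀ m : ℕ, O.{0} (b + 1) (hsub b (b + 1) m) = O.{0} b m := by
  intro m
  induction m using Nat.strong_induction_on with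
  | _ m IH =>
    by_cases hm : m = 0
    · rw [hm, hsub_zero, O_zero, O_zero]
    · have hbpos : 0 < b := by omega
      set l := Nat.log b m with hl
      set d := m / b ^ l with hd
      set r := m % b ^ l with hr
      set E := hsub b (b + 1) l with hE
      have hlpos : 0 < b ^ l := Nat.pow_pos hbpos
      have hlx : l < m := Nat.log_lt_self b hm
      have hrblt : r < b ^ l := Nat.mod_lt _ hlpos
      have hrlt : r < m := lt_of_lt_of_le hrblt (Nat.pow_log_le_self b hm)
      have hd0 : 0 < d :=
        Nat.one_le_div_iff hlpos |>.2 (Nat.pow_log_le_self b hm)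
      have hdb : d < b := by
        rw [hd, Nat.div_lt_iff_lt_mul hlpos]
        calc m < b ^ (l + 1) := Nat.lt_pow_succ_log_self (by omega) m
          _ = b * b ^ l := by ring
      have hrE : hsub b (b + 1) r < (b + 1) ^ E :=
        (hsub_key b (b + 1) hb (by omega) r).1 l hrblt
      have hm' : hsub b (b + 1) m = (b + 1) ^ E * d + hsub b (b + 1) r := by
        rw [hsub, if_neg hm, ← hl, ← hd, ← hr, ← hE]
      obtain ⟨hlog, hdiv, hmod⟩ := nat_decomp (u := b + 1) (E := E) (d := d)
        (r := hsub b (b + 1) r) (by omega) hd0 (by omega) hrE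
      have hne : hsub b (b + 1) m ≠ 0 := by
        have := hsub_pos hb (by omega) hm (b := b) (u := b + 1); omega
      conv_lhs => rw [O, if_neg hne]
      rw [hm', hlog, hdiv, hmod]
      rw [IH l hlx, IH r hrlt]
      conv_rhs => rw [O, if_neg hm]

lemma B_zero (b : ℕ) : B b 0 = 0 := hsub_zero _ _

lemma G_succ_succ (k m : ℕ) : G (k + 2) m = B (k + 2) (G (k + 1) m) - 1 := rfl

open Ordinal in
lemma exists_goodstein_zero (m : ℕ) : ∃ N : ℕ, 1 ≤ N ∧ G N m = 0 := by
  by_contra hcon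
  push_neg at hcon
  have hne : ∀ n : ℕ, G (n + 1) m ≠ 0 := fun n => hcon (n + 1) (by omega)
  have hdec : ∀ n : ℕ, O.{0} (n + 3) (G (n + 2) m) < O.{0} (n + 2) (G (n + 1) m) := by
    intro n
    have hg := hne n
    have hB : B (n + 2) (G (n + 1) m) ≠ 0 := by
      have := hsub_pos (b := n + 2) (u := n + 2 + 1) (by omega) (by omega) hg
      unfold B; omega
    have hlt : G (n + 2) m < B (n + 2) (G (n + 1) m) := by
      rw [G_succ_succ]; omega
    calc O (n + 3) (G (n + 2) m)
        < O (n + 3) (B (n + 2) (G (n + 1) m)) :=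
          (O_key (n + 3) (by omega) _).2 _ hlt
      _ = O (n + 2) (G (n + 1) m) := O_hsub (n + 2) (by omega) _
  exact (RelEmbedding.natGT (fun n => O.{0} (n + 2) (G (n + 1) m))
    (fun n => hdec n)).not_wellFounded Ordinal.lt_wf

end Aux


/-- For every `m ≥ 1` and every natural number base `u ≥ 2`, it is not the case
that the Goodstein sequence of `m`, rebased into base `u` (the `n`-th term
`G n m`, written in hereditary base `n+1`, having its base replaced by `u`),
is strictly increasing at every step. -/
theorem rebased_goodstein_not_strictly_increasing (m u : ℕ) (hm : 1 ≤ m) (hu : 2 ≤ u) :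
    ¬ ∀ n : ℕ, 1 ≤ n → hsub (n + 1) u (G n m) < hsub (n + 2) u (G (n + 1) m) := by
  intro h
  obtain ⟨N, hN1, hN0⟩ := exists_goodstein_zero m
  have hN1' : G (N + 1) m = 0 := by
    obtain ⟨k, rfl⟩ : ∃ k, N = k + 1 := ⟨N - 1, by omega⟩
    rw [G_succ_succ, hN0, B_zero]
  have := h N hN1
  rw [hN0, hN1', hsub_zero, hsub_zero] at this
  exact lt_irrefl 0 this
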